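/- If t is reachable from s in a directed graph G, and O is an elimination ordering placing s and t after all other vertices, then the edge (s,t) belongs to the vertex elimination graph of G according to O. -/

import Mathlib

/-- The vertex elimination sequence: `elimSeq E i` is the edge relation of the
graph `G_i` obtained from `G = G_0` by successively eliminating the vertices
`0, 1, ..., i-1` (the elimination ordering is the index order on `Fin n`).
Eliminating a vertex removes it and connects each of its in-neighbors to each
of its out-neighbors (no self-loops). -/
def elimSeq {n : ℕ} (E : Fin n → Fin n → Prop) : ℕ → Fin n → Fin n → Prop
  | 0 => E
  | (i+1) => fun j k =>
      j.val ≠ i ∧ k.val ≠ i ∧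
      (elimSeq E i j k ∨
        (j ≠ k ∧ ∃ m : Fin n, m.val = i ∧ elimSeq E i j m ∧ elimSeq E i m k))

/-- The vertex elimination graph `G*`: the union of all the `G_i`. -/
def estar {n : ℕ} (E : Fin n → Fin n → Prop) (j k : Fin n) : Prop :=
  ∃ i, elimSeq E i j k

/-- `tri E a b c` : the triangle recording that the edge `(a, c)` is created
while eliminating the (middle) vertex `b`. -/
def tri {n : ℕ} (E : Fin n → Fin n → Prop) (a b c : Fin n) : Prop :=
  a ≠ c ∧ elimSeq E b.val a b ∧ elimSeq E b.val b c

/-- A directed graph is acyclic iff no vertex lies on a nonempty closed walk. -/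
def Acyclic {n : ℕ} (E : Fin n → Fin n → Prop) : Prop :=
  ∀ v, ¬ Relation.TransGen E v v

/-- The graph `G_M` induced by a model `σ` via the edge variables `e`. -/
def modelGraph {n : ℕ} {Var : Type*} (E : Fin n → Fin n → Prop)
    (e : Fin n → Fin n → Var) (σ : Var → Prop) : Fin n → Fin n → Prop :=
  fun i j => E i j ∧ σ (e i j)

/-- Restricted walk relation at level `i`. -/
def myR {n : ℕ} (E : Fin n → Fin n → Prop) (s t : Fin n) (i : ℕ) (p q : Fin n) : Prop :=
  elimSeq E i p q ∧ (p = s ∨ i ≤ p.val) ∧ (q = t ∨ i ≤ q.val)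

lemma persist {n : ℕ} {E : Fin n → Fin n → Prop} {i : ℕ} {p q : Fin n}
    (h : elimSeq E i p q) (hp : p.val ≠ i) (hq : q.val ≠ i) : elimSeq E (i+1) p q :=
  ⟨hp, hq, Or.inl h⟩

lemma triagl {n : ℕ} {E : Fin n → Fin n → Prop} {i : ℕ} {p v c : Fin n}
    (hne : p ≠ c) (hv : v.val = i) (h1 : elimSeq E i p v) (h2 : elimSeq E i v c)
    (hp : p.val ≠ i) (hc : c.val ≠ i) : elimSeq E (i+1) p c :=
  ⟨hp, hc, Or.inr ⟨hne, v, hv, h1, h2⟩⟩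

lemma bump {n : ℕ} {i : ℕ} {x w : Fin n} (h : x = w ∨ i ≤ x.val) (hx : x.val ≠ i) :
    x = w ∨ i + 1 ≤ x.val :=
  h.imp id (fun hi => Nat.lt_of_le_of_ne hi (Ne.symm hx))

lemma step_lemma {n : ℕ} (E : Fin n → Fin n → Prop) (s t : Fin n) (i : ℕ) (v : Fin n)
    (hst : s ≠ t) (hv : v.val = i) (hsv : s ≠ v) (htv : t ≠ v)
    (h : Relation.TransGen (myR E s t i) s t) :
    Relation.TransGen (myR E s t (i+1)) s t := by
  have neval : ∀ {x : Fin n}, x ≠ v → x.val ≠ i := by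
    intro x hx hc
    exact hx (Fin.ext (hc.trans hv.symm))
  suffices H : ∀ a, Relation.TransGen (myR E s t i) a t →
      ((a ≠ v → (Relation.TransGen (myR E s t (i+1)) a t ∨ a = t)) ∧
       (a = v → ∀ p, p ≠ v → (p = s ∨ i ≤ p.val) → elimSeq E i p v →
          (Relation.TransGen (myR E s t (i+1)) p t ∨ p = t))) by
    rcases (H s h).1 hsv with h' | h'
    · exact h'
    · exact absurd h' hst
  intro a h
  induction h using Relation.TransGen.head_induction_on with
  | single hstep =>
    rename_i a
    obtain ⟨he, hac, _⟩ := hstep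
    constructor
    · intro hav
      exact Or.inl (Relation.TransGen.single
        ⟨persist he (neval hav) (neval htv), bump hac (neval hav), Or.inl rfl⟩)
    · intro hav p hpv hpc hpe
      by_cases hpt : p = t
      · exact Or.inr hpt
      · refine Or.inl (Relation.TransGen.single
          ⟨triagl hpt hv hpe (hav ▸ he) (neval hpv) (neval htv), bump hpc (neval hpv), Or.inl rfl⟩)
  | head hstep htail IH =>
    rename_i a c
    obtain ⟨he, hac, hcc⟩ := hstep
    by_cases hcv : c = v
    · -- c is the eliminated vertex
      constructor
      · intro hav
        exact (IH.2 hcv) a hav hac (hcv ▸ he)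
      · intro hav p hpv hpc hpe
        exact (IH.2 hcv) p hpv hpc hpe
    · -- c survives
      have IHc := IH.1 hcv
      constructor
      · intro hav
        have step' : myR E s t (i+1) a c :=
          ⟨persist he (neval hav) (neval hcv), bump hac (neval hav), bump hcc (neval hcv)⟩
        rcases IHc with h' | h'
        · exact Or.inl (Relation.TransGen.head step' h')
        · exact Or.inl (Relation.TransGen.single (h' ▸ step'))
      · intro hav p hpv hpc hpe
        by_cases hpceq : p = c
        · exact hpceq ▸ IHc
        · have step' : myR E s t (i+1) p c :=
            ⟨triagl hpceq hv hpe (hav ▸ he) (neval hpv) (neval hcv),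
             bump hpc (neval hpv), bump hcc (neval hcv)⟩
          rcases IHc with h' | h'
          · exact Or.inl (Relation.TransGen.head step' h')
          · exact Or.inl (Relation.TransGen.single (h' ▸ step'))

lemma reach_at {n : ℕ} (E : Fin n → Fin n → Prop) (s t : Fin n) (hst : s ≠ t)
    (horder : ∀ v : Fin n, v ≠ s → v ≠ t → v.val < s.val ∧ v.val < t.val)
    (hreach : Relation.TransGen E s t) :
    ∀ i, i ≤ min s.val t.val → Relation.TransGen (myR E s t i) s t := by
  intro i
  induction i with
  | zero =>
    intro _
    exact Relation.TransGen.mono (fun p q h => ⟨h, Or.inr (Nat.zero_le _), Or.inr (Nat.zero_le _)⟩) _ _ hreach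
  | succ i IH =>
    intro hle
    have hi : i < min s.val t.val := Nat.lt_of_succ_le hle
    have prev := IH (Nat.le_of_lt hi)
    by_cases hn : i < n
    · set v : Fin n := ⟨i, hn⟩ with hvdef
      have hsval : v.val = i := rfl
      have hsv : s ≠ v := by
        intro h
        have : s.val = i := by rw [h]
        omega
      have htv : t ≠ v := by
        intro h
        have : t.val = i := by rw [h]
        omega
      exact step_lemma E s t i v hst hsval hsv htv prev
    · exact Relation.TransGen.mono (fun p q h => by
        obtain ⟨he, hpc, hqc⟩ := h
        have hp : p.val ≠ i := by have := p.isLt; omega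
        have hq : q.val ≠ i := by have := q.isLt; omega
        exact ⟨persist he hp hq, bump hpc hp, bump hqc hq⟩) _ _ prev


lemma final_edge {n : ℕ} (E : Fin n → Fin n → Prop) (s t : Fin n) (hst : s ≠ t)
    (horder : ∀ v : Fin n, v ≠ s → v ≠ t → v.val < s.val ∧ v.val < t.val)
    (h : Relation.TransGen (myR E s t (min s.val t.val)) s t) :
    elimSeq E (min s.val t.val) s t := by
  set m := min s.val t.val with hm
  suffices H : ∀ a, Relation.TransGen (myR E s t m) a t → a = s → elimSeq E m s t from
    H s h rfl
  intro a h
  induction h using Relation.TransGen.head_induction_on with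
  | single hstep =>
    intro ha
    exact ha ▸ hstep.1
  | head hstep htail IH =>
    rename_i a c
    intro ha
    obtain ⟨he, _, hcc⟩ := hstep
    by_cases hct : c = t
    · exact ha ▸ hct ▸ he
    · have hcm : m ≤ c.val := hcc.resolve_left hct
      have hcs : c = s := by
        by_contra hcs
        rcases horder c hcs hct with ⟨h1, h2⟩
        omega
      exact IH hcs


/-- if `t` is reachable from `s` in `G` and the elimination
ordering places `s` and `t` after all other vertices, then `(s,t) ∈ E*`. -/
theorem stmt10 {n : ℕ} (E : Fin n → Fin n → Prop) (s t : Fin n) (hne : s ≠ t)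
    (horder : ∀ v : Fin n, v ≠ s → v ≠ t → v.val < s.val ∧ v.val < t.val)
    (hreach : Relation.TransGen E s t) :
    estar E s t :=
  ⟨min s.val t.val, final_edge E s t hne horder
    (reach_at E s t hne horder hreach (min s.val t.val) le_rfl)⟩
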